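/- In the two-unit three-period example (unit A treated from period 2, unit B treated from period 3) with expected outcomes E[Y_it] = α_i + β_t + τ_it·D_it where D_it = 1[t ≥ E_i], the static two-way fixed effects OLS estimand equals τ_A2 + (1/2)τ_B3 − (1/2)τ_A3; in particular the long-run effect τ_A3 receives a negative weight −1/2. -/
import Mathlib


open Finset

/-- Two-unit (A = 0, B = 1), three-period (t = 0,1,2 representing 1,2,3)
example: A is treated from the second period, B from the third, so the
treatment indicator is `D i t = 1[t ≥ e i]` with `e 0 = 1`, `e 1 = 2`.
Expected outcomes are `α i + β t + τ i t * D i t`.  The static TWFE OLS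
estimand, computed by Frisch–Waugh–Lovell as
`(Σ D̃ E[Y]) / (Σ D̃²)` with `D̃` the double-demeaned treatment indicator,
equals `τ_{A2} + (1/2) τ_{B3} − (1/2) τ_{A3}` (a weight of −1/2 on the
long-run effect `τ_{A3}`). -/
theorem static_ols_two_by_three
    (α : Fin 2 → ℝ) (β : Fin 3 → ℝ) (τ : Fin 2 → Fin 3 → ℝ)
    (e : Fin 2 → Fin 3) (he : e 0 = 1 ∧ e 1 = 2)
    (D : Fin 2 → Fin 3 → ℝ) (hD : ∀ i t, D i t = if e i ≤ t then 1 else 0)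
    (EY : Fin 2 → Fin 3 → ℝ)
    (hEY : ∀ i t, EY i t = α i + β t + τ i t * D i t)
    (Dbar_unit : Fin 2 → ℝ) (hDu : ∀ i, Dbar_unit i = (∑ t, D i t) / 3)
    (Dbar_per : Fin 3 → ℝ) (hDp : ∀ t, Dbar_per t = (∑ i, D i t) / 2)
    (Dbar : ℝ) (hDb : Dbar = (∑ i, ∑ t, D i t) / 6)
    (Dtil : Fin 2 → Fin 3 → ℝ)
    (hDt : ∀ i t, Dtil i t = D i t - Dbar_unit i - Dbar_per t + Dbar)
    (τstatic : ℝ)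
    (hτ : τstatic = (∑ i, ∑ t, Dtil i t * EY i t) / (∑ i, ∑ t, (Dtil i t) ^ 2)) :
    τstatic = τ 0 1 + (1 / 2) * τ 1 2 - (1 / 2) * τ 0 2 := by
  obtain ⟨h0, h1⟩ := he
  have hD' : ∀ i t, D i t = if e i ≤ t then 1 else 0 := hD
  subst hτ
  simp only [hDt, hEY, hDu, hDp, hDb, hD, h0, h1, Fin.sum_univ_two, Fin.sum_univ_three]
  norm_num [Fin.le_def, Fin.ext_iff]
  ring
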